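/- Let Q be a simple binary join query with input size m, λ ∈ [1, m] an integer, H ⊆ attset(Q), and I the set of isolated attributes. Then Σ_{η ∈ config(Q, H)} |Join(Q''_isolated(η))| ≤ |Join(Q*)|. -/
import Mathlib


open scoped BigOperators Classical

namespace BinaryJoins

/-! ### Hypergraphs, fractional edge coverings and packings

A hypergraph is given by a finite vertex set `V : Finset α` and a finite
edge set `E : Finset (Finset α)`.  A weight assignment is a function
`W : Finset α → ℝ` (only its values on `E` matter). -/

variable {α : Type} [DecidableEq α]

/-- The weight of a vertex `X`: the sum of the weights of all edges incident to `X`. -/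
def vertexWeight (E : Finset (Finset α)) (W : Finset α → ℝ) (X : α) : ℝ :=
  ∑ e ∈ E.filter (fun e => X ∈ e), W e

/-- `W` is a fractional edge covering: edge weights lie in `[0,1]` and every
vertex of `V` has weight at least 1. -/
def IsFracEdgeCover (V : Finset α) (E : Finset (Finset α)) (W : Finset α → ℝ) : Prop :=
  (∀ e ∈ E, 0 ≤ W e ∧ W e ≤ 1) ∧ ∀ X ∈ V, 1 ≤ vertexWeight E W X

/-- `W` is a fractional edge packing: edge weights lie in `[0,1]` and every
vertex of `V` has weight at most 1. -/
def IsFracEdgePack (V : Finset α) (E : Finset (Finset α)) (W : Finset α → ℝ) : Prop :=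
  (∀ e ∈ E, 0 ≤ W e ∧ W e ≤ 1) ∧ ∀ X ∈ V, vertexWeight E W X ≤ 1

/-- The fractional edge covering number `ρ`: the smallest total weight of a
fractional edge covering. -/
noncomputable def rho (V : Finset α) (E : Finset (Finset α)) : ℝ :=
  sInf {t | ∃ W : Finset α → ℝ, IsFracEdgeCover V E W ∧ t = ∑ e ∈ E, W e}

/-- The fractional edge packing number `τ`: the largest total weight of a
fractional edge packing. -/
noncomputable def tau (V : Finset α) (E : Finset (Finset α)) : ℝ :=
  sSup {t | ∃ W : Finset α → ℝ, IsFracEdgePack V E W ∧ t = ∑ e ∈ E, W e}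

/-- A binary hypergraph: every edge is a 2-element subset of `V`, and every
vertex is incident to at least one edge. -/
def BinaryHG (V : Finset α) (E : Finset (Finset α)) : Prop :=
  (∀ e ∈ E, e ⊆ V ∧ e.card = 2) ∧ ∀ X ∈ V, ∃ e ∈ E, X ∈ e


/-! ### Tuples, relations, and join queries

`dom` is the domain of values; a tuple over a set `U` of attributes is
represented as a function `att → Option dom` that is `some`-valued exactly
on `U`. -/

variable {att dom : Type}

/-- A (partial) tuple. -/
abbrev Tup (att dom : Type) := att → Option dom

/-- `u` is a tuple over the attribute set `U`. -/
def IsTupleOn (u : Tup att dom) (U : Set att) : Prop :=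
  ∀ x : att, (u x).isSome ↔ x ∈ U

/-- The projection (restriction) of a tuple on an attribute set `V`. -/
noncomputable def restrict (u : Tup att dom) (V : Set att) : Tup att dom :=
  fun x => if x ∈ V then u x else none

/-- A relation: a finite set of tuples over a common scheme. -/
structure Relation (att dom : Type) where
  scheme : Finset att
  tuples : Set (Tup att dom)
  finite : tuples.Finite
  wf : ∀ u ∈ tuples, IsTupleOn u ↑scheme

variable [DecidableEq att]

/-- A join query is a finite set of relations; `attset Q` is the set of all
attributes appearing in the schemes of its relations. -/
def attset (Q : Finset (Relation att dom)) : Finset att :=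
  Q.biUnion fun R => R.scheme

/-- The result `Join(Q)` of a join query. -/
def JoinQ (Q : Finset (Relation att dom)) : Set (Tup att dom) :=
  { u | IsTupleOn u ↑(attset Q) ∧ ∀ R ∈ Q, restrict u ↑R.scheme ∈ R.tuples }

/-- A query is simple if no two distinct relations share a scheme. -/
def SimpleQ (Q : Finset (Relation att dom)) : Prop :=
  ∀ R ∈ Q, ∀ S ∈ Q, R.scheme = S.scheme → R = S

/-- A query is binary if every relation's scheme has exactly two attributes. -/
def BinaryQ (Q : Finset (Relation att dom)) : Prop :=
  ∀ R ∈ Q, R.scheme.card = 2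

/-- The input size `m` of a query. -/
noncomputable def inputSize (Q : Finset (Relation att dom)) : ℕ :=
  ∑ R ∈ Q, R.tuples.ncard

/-- The edge set of the hypergraph defined by `Q` (its vertex set is `attset Q`). -/
def edgeSet (Q : Finset (Relation att dom)) : Finset (Finset att) :=
  Q.image fun R => R.scheme

/-! ### Heavy and light values -/

/-- Value `x` is heavy on attribute `X`: some relation of `Q` has at least
`m/λ` tuples carrying `x` on `X`. -/
def HeavyOn (Q : Finset (Relation att dom)) (lam : ℕ) (X : att) (x : dom) : Prop :=
  ∃ R ∈ Q, X ∈ R.scheme ∧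
    (inputSize Q : ℝ) / (lam : ℝ) ≤ ({u ∈ R.tuples | u X = some x}.ncard : ℝ)

/-- Value `x` is heavy (on some attribute). -/
def Heavy (Q : Finset (Relation att dom)) (lam : ℕ) (x : dom) : Prop :=
  ∃ X : att, HeavyOn Q lam X x

/-- Value `x` appears in at least one relation of `Q`. -/
def Appears (Q : Finset (Relation att dom)) (x : dom) : Prop :=
  ∃ R ∈ Q, ∃ X ∈ R.scheme, ∃ u ∈ R.tuples, u X = some x

/-- Value `x` appears on attribute `Y` in a relation of `Q`. -/
def AppearsOn (Q : Finset (Relation att dom)) (Y : att) (x : dom) : Prop :=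
  ∃ R ∈ Q, Y ∈ R.scheme ∧ ∃ u ∈ R.tuples, u Y = some x

/-! ### Configurations and residual queries

Below, `Hv : att → dom → Prop` is the "heavy" predicate (`Hv X x` meaning
that value `x` is heavy on attribute `X`); in applications it is
instantiated with `HeavyOn Q lam`. -/

/-- The set `config(Q, H)` of configurations of `H`: tuples over `H` whose
values are heavy. -/
def config (Hv : att → dom → Prop) (H : Finset att) : Set (Tup att dom) :=
  { η | IsTupleOn η ↑H ∧ ∀ X ∈ H, ∀ x : dom, η X = some x → Hv X x }

/-- The residual relation `R'ₑ(η)` (over `e \ H`) of the relation `R` with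
scheme `e`, under configuration `η` of `H`: projections on `e \ H` of the
tuples of `R` that agree with `η` on `e ∩ H` and are light outside `H`. -/
def ResidualTuples (Q : Finset (Relation att dom)) (Hv : att → dom → Prop)
    (H : Finset att) (η : Tup att dom) (R : Relation att dom) : Set (Tup att dom) :=
  { v | ∃ w ∈ R.tuples,
      (∀ X ∈ R.scheme ∩ H, w X = η X) ∧
      (∀ Y ∈ R.scheme \ H, ∀ y : dom, w Y = some y → ¬ Hv Y y ∧ Appears Q y) ∧
      v = restrict w ↑(R.scheme \ H) }

/-- The result of the residual query `Q'(η)`: tuples over `attset Q \ H`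
whose projection on each active edge `e` belongs to `R'ₑ(η)`. -/
def JoinResidual (Q : Finset (Relation att dom)) (Hv : att → dom → Prop)
    (H : Finset att) (η : Tup att dom) : Set (Tup att dom) :=
  { u | IsTupleOn u ↑(attset Q \ H) ∧
      ∀ R ∈ Q, (R.scheme \ H).Nonempty →
        restrict u ↑(R.scheme \ H) ∈ ResidualTuples Q Hv H η R }

/-- `m_η`: the total size of the relations of the residual query `Q'(η)`. -/
noncomputable def residualSize (Q : Finset (Relation att dom)) (Hv : att → dom → Prop)
    (H : Finset att) (η : Tup att dom) : ℕ :=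
  ∑ R ∈ Q, if (R.scheme \ H).Nonempty then (ResidualTuples Q Hv H η R).ncard else 0

/-- Combine a tuple over a set disjoint from `H` with a configuration `η` over `H`. -/
def combine (H : Finset att) (η u : Tup att dom) : Tup att dom :=
  fun x => if x ∈ H then η x else u x

/-! ### Cross edges, isolated attributes, and the semi-join reduction -/

/-- `e` is a cross edge w.r.t. `H`: it meets both `H` and its complement. -/
def IsCross (H : Finset att) (e : Finset att) : Prop :=
  (e ∩ H).Nonempty ∧ (e \ H).Nonempty

/-- The set `I` of isolated attributes: light attributes `X` such that `{X}`
is the only edge incident to `X` in the subgraph induced by the light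
attributes `L = attset Q \ H`. -/
def isolatedSet (Q : Finset (Relation att dom)) (H : Finset att) : Finset att :=
  (attset Q \ H).filter fun X => ∀ R ∈ Q, X ∈ R.scheme → R.scheme \ H = {X}

/-- The unary tuple over `{X}` carrying value `x`. -/
def singletonTup (X : att) (x : dom) : Tup att dom :=
  fun Y => if Y = X then some x else none

/-- `X` is a border attribute: a light attribute appearing in a cross edge. -/
def BorderAttr (Q : Finset (Relation att dom)) (H : Finset att) (X : att) : Prop :=
  X ∈ attset Q ∧ X ∉ H ∧ ∃ R ∈ Q, X ∈ R.scheme ∧ IsCross H R.scheme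

/-- The set of values of the unary relation `R''_X(η)`: the intersection of
the residual relations `R'ₑ(η)` over all cross edges `e` containing `X`. -/
def Rpp (Q : Finset (Relation att dom)) (Hv : att → dom → Prop)
    (H : Finset att) (η : Tup att dom) (X : att) : Set dom :=
  { x | ∀ R ∈ Q, IsCross H R.scheme → X ∈ R.scheme →
      singletonTup X x ∈ ResidualTuples Q Hv H η R }

/-- The cartesian product `Join(Q''_J(η))` of the unary relations `R''_X(η)`,
`X ∈ J` (for `J = I` this is `Join(Q''_isolated(η))`). -/
def JoinIso (Q : Finset (Relation att dom)) (Hv : att → dom → Prop)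
    (H : Finset att) (η : Tup att dom) (J : Finset att) : Set (Tup att dom) :=
  { u | IsTupleOn u ↑J ∧ ∀ X ∈ J, ∀ x : dom, u X = some x → x ∈ Rpp Q Hv H η X }

/-! ### The query `Q*` and its hypergraph -/

/-- The result `Join(Q*)` of the query `Q*`: tuples over `I ∪ H` that
(i) project into `R_e` for every cross edge `e` incident to `I`, (ii) take a
heavy value on every attribute of `H`, and (iii) take, on every `Y ∈ I`, a
value appearing on `Y` in a relation of `Q`. -/
def JoinStar (Q : Finset (Relation att dom)) (Hv : att → dom → Prop)
    (H : Finset att) : Set (Tup att dom) :=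
  { t | IsTupleOn t ↑(isolatedSet Q H ∪ H) ∧
      (∀ R ∈ Q, IsCross H R.scheme → (R.scheme ∩ isolatedSet Q H).Nonempty →
        restrict t ↑R.scheme ∈ R.tuples) ∧
      (∀ X ∈ H, ∀ x : dom, t X = some x → Hv X x) ∧
      (∀ Y ∈ isolatedSet Q H, ∀ y : dom, t Y = some y → AppearsOn Q Y y) }

/-- The edge set `E*` of the hypergraph `G*` of `Q*`: the cross edges of `G`
incident to `I`, a unary edge `{X}` for each `X ∈ H`, and a unary edge `{Y}`
for each `Y ∈ I`.  (Its vertex set is `V* = I ∪ H`.) -/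
noncomputable def starEdges (Q : Finset (Relation att dom)) (H : Finset att) :
    Finset (Finset att) :=
  (edgeSet Q).filter (fun e => IsCross H e ∧ (e ∩ isolatedSet Q H).Nonempty)
    ∪ H.image (fun X => {X}) ∪ (isolatedSet Q H).image (fun Y => {Y})

/-! ### The reduced query `Q''(η)` -/

/-- The reduced relation `R''ₑ(η)` of a light edge `e = scheme R`: the tuples
of `R'ₑ(η)` whose values on border attributes survive the semi-join
reduction. -/
def ReducedTuples (Q : Finset (Relation att dom)) (Hv : att → dom → Prop)
    (H : Finset att) (η : Tup att dom) (R : Relation att dom) : Set (Tup att dom) :=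
  { u | u ∈ ResidualTuples Q Hv H η R ∧
      ∀ X ∈ R.scheme, BorderAttr Q H X → ∀ x : dom, u X = some x → x ∈ Rpp Q Hv H η X }

/-- The result `Join(Q''_light(η))`: tuples over `L \ I` whose projection on
every light edge belongs to the corresponding reduced relation. -/
def JoinLight (Q : Finset (Relation att dom)) (Hv : att → dom → Prop)
    (H : Finset att) (η : Tup att dom) : Set (Tup att dom) :=
  { u | IsTupleOn u ↑((attset Q \ H) \ isolatedSet Q H) ∧
      ∀ R ∈ Q, R.scheme ∩ H = ∅ → restrict u ↑R.scheme ∈ ReducedTuples Q Hv H η R }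

/-- The result `Join(Q''(η))` of the reduced query: tuples over `L` whose
projections on light edges are in the reduced relations and whose values on
isolated attributes are in the corresponding unary relations. -/
def JoinReduced (Q : Finset (Relation att dom)) (Hv : att → dom → Prop)
    (H : Finset att) (η : Tup att dom) : Set (Tup att dom) :=
  { u | IsTupleOn u ↑(attset Q \ H) ∧
      (∀ R ∈ Q, R.scheme ∩ H = ∅ → restrict u ↑R.scheme ∈ ReducedTuples Q Hv H η R) ∧
      (∀ X ∈ isolatedSet Q H, ∀ x : dom, u X = some x → x ∈ Rpp Q Hv H η X) }



/-! ### Auxiliary lemmas -/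

lemma appearsOn_finite (Q : Finset (Relation att dom)) (a : att) :
    {x : dom | AppearsOn Q a x}.Finite := by
  have h : {x : dom | AppearsOn Q a x} ⊆
      ⋃ R ∈ Q, (some ⁻¹' ((fun u => u a) '' R.tuples) : Set dom) := by
    rintro x ⟨R, hR, _, u, hu, hux⟩
    exact Set.mem_biUnion hR ⟨u, hu, hux⟩
  refine Set.Finite.subset ?_ h
  refine Set.Finite.biUnion Q.finite_toSet (fun R _ => ?_)
  exact Set.Finite.preimage (Set.injOn_of_injective (Option.some_injective dom))
    ((R.finite).image _)

lemma finite_of_pointwise [Finite att] (S : Set (Tup att dom)) (A : att → Set dom)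
    (hA : ∀ a, (A a).Finite)
    (h : ∀ t ∈ S, ∀ a, ∀ x : dom, t a = some x → x ∈ A a) : S.Finite := by
  have hsub : S ⊆ Set.pi Set.univ (fun a => insert none (some '' A a)) := by
    intro t ht a _
    cases hx : t a with
    | none => exact Set.mem_insert _ _
    | some x => exact Set.mem_insert_of_mem _ ⟨x, h t ht a x hx, rfl⟩
  exact Set.Finite.subset (Set.Finite.pi fun a => ((hA a).image _).insert _) hsub

lemma heavy_appearsOn (Q : Finset (Relation att dom)) (lam : ℕ)
    (hlam1 : 1 ≤ lam) (hlam2 : lam ≤ inputSize Q) {X : att} {x : dom}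
    (h : HeavyOn Q lam X x) : AppearsOn Q X x := by
  obtain ⟨R, hR, hX, hcard⟩ := h
  have hl0 : (0 : ℝ) < (lam : ℝ) := by exact_mod_cast hlam1
  have hm : (1 : ℝ) ≤ (inputSize Q : ℝ) / (lam : ℝ) := by
    rw [le_div_iff₀ hl0, one_mul]
    exact_mod_cast hlam2
  have hne : {u ∈ R.tuples | u X = some x}.Nonempty := by
    apply Set.nonempty_of_ncard_ne_zero
    intro h0
    rw [h0] at hcard
    simp at hcard
    linarith
  obtain ⟨u, hu, hux⟩ := hne
  exact ⟨R, hR, hX, u, hu, hux⟩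

lemma iso_cross (Q : Finset (Relation att dom)) (hB : BinaryQ Q) (H : Finset att)
    {Y : att} (hY : Y ∈ isolatedSet Q H) :
    ∃ R ∈ Q, Y ∈ R.scheme ∧ IsCross H R.scheme ∧ R.scheme \ H = {Y} := by
  obtain ⟨hYa, hiso⟩ := Finset.mem_filter.1 hY
  obtain ⟨hYatt, hYH⟩ := Finset.mem_sdiff.1 hYa
  obtain ⟨R, hR, hYs⟩ := Finset.mem_biUnion.1 hYatt
  have hsd : R.scheme \ H = {Y} := hiso R hR hYs
  obtain ⟨b, c, hbc, hsch⟩ := Finset.card_eq_two.1 (hB R hR)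
  have hY' : Y = b ∨ Y = c := by
    have := hsch ▸ hYs
    simpa using this
  have hex : ∃ a ∈ R.scheme, a ≠ Y := by
    rcases hY' with rfl | rfl
    · exact ⟨c, by simp [hsch], fun h => hbc h.symm⟩
    · exact ⟨b, by simp [hsch], hbc⟩
  obtain ⟨a, has, haY⟩ := hex
  have haH : a ∈ H := by
    by_contra haH
    have : a ∈ R.scheme \ H := Finset.mem_sdiff.2 ⟨has, haH⟩
    rw [hsd] at this
    exact haY (Finset.mem_singleton.1 this)
  refine ⟨R, hR, hYs, ⟨⟨a, Finset.mem_inter.2 ⟨has, haH⟩⟩, ⟨Y, ?_⟩⟩, hsd⟩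
  rw [hsd]; exact Finset.mem_singleton_self Y

lemma rpp_appears (Q : Finset (Relation att dom)) (Hv : att → dom → Prop)
    (hB : BinaryQ Q) (H : Finset att) (η : Tup att dom) {Y : att} {x : dom}
    (hY : Y ∈ isolatedSet Q H) (hx : x ∈ Rpp Q Hv H η Y) : AppearsOn Q Y x := by
  obtain ⟨R, hR, hYs, hcross, hsd⟩ := iso_cross Q hB H hY
  obtain ⟨w, hw, _, _, hw3⟩ := hx R hR hcross hYs
  have hYmem : Y ∈ (↑(R.scheme \ H) : Set att) := by rw [hsd]; simp
  have hwY : w Y = some x := by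
    have h := congrFun hw3 Y
    simp only [singletonTup, restrict, if_pos rfl, if_pos hYmem] at h
    exact h.symm
  exact ⟨R, hR, hYs, w, hw, hwY⟩

lemma restrict_combine_left (H : Finset att) {η : Tup att dom} (u : Tup att dom)
    (hη : IsTupleOn η ↑H) : restrict (combine H η u) ↑H = η := by
  funext x
  by_cases hx : x ∈ H
  · simp [restrict, combine, hx]
  · have : η x = none := by
      rw [← Option.not_isSome_iff_eq_none]
      simp [hη x, hx]
    simp [restrict, hx, this]

lemma restrict_combine_right (H J : Finset att) (hdisj : ∀ x ∈ J, x ∉ H)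
    {η u : Tup att dom} (hu : IsTupleOn u ↑J) :
    restrict (combine H η u) ↑J = u := by
  funext x
  by_cases hx : x ∈ J
  · simp [restrict, combine, hx, hdisj x hx]
  · have : u x = none := by
      rw [← Option.not_isSome_iff_eq_none]
      simp [hu x, hx]
    simp [restrict, hx, this]

lemma combine_injOn (H J : Finset att) (hdisj : ∀ x ∈ J, x ∉ H) (η : Tup att dom)
    {S : Set (Tup att dom)} (hS : ∀ u ∈ S, IsTupleOn u ↑J) :
    Set.InjOn (combine H η) S := by
  intro u hu u' hu' h
  rw [← restrict_combine_right H J hdisj (hS u hu), h,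
    restrict_combine_right H J hdisj (hS u' hu')]

lemma combine_mem_star (Q : Finset (Relation att dom)) (hB : BinaryQ Q)
    (Hv : att → dom → Prop) (H : Finset att) {η u : Tup att dom}
    (hη : η ∈ config Hv H)
    (hu : u ∈ JoinIso Q Hv H η (isolatedSet Q H)) :
    combine H η u ∈ JoinStar Q Hv H := by
  obtain ⟨hηt, hηh⟩ := hη
  obtain ⟨hut, huR⟩ := hu
  have hIH : ∀ x ∈ isolatedSet Q H, x ∉ H := fun x hx =>
    (Finset.mem_sdiff.1 (Finset.mem_filter.1 hx).1).2
  refine ⟨?_, ?_, ?_, ?_⟩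
  · intro x
    by_cases hx : x ∈ H
    · simp [combine, hx, hηt x]
    · have : x ∈ isolatedSet Q H ∪ H ↔ x ∈ isolatedSet Q H := by simp [hx]
      simp only [combine, if_neg hx, Finset.coe_union, Set.mem_union,
        Finset.mem_coe]
      rw [hut x]
      simp [hx]
  · intro R hR hcross hmeet
    obtain ⟨Z, hZ⟩ := hmeet
    obtain ⟨hZs, hZI⟩ := Finset.mem_inter.1 hZ
    have hiso : R.scheme \ H = {Z} := (Finset.mem_filter.1 hZI).2 R hR hZs
    have hZH : Z ∉ H := hIH Z hZI
    have hZsome : (u Z).isSome := (hut Z).2 (by simpa using hZI)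
    obtain ⟨z, hz⟩ := Option.isSome_iff_exists.1 hZsome
    have hzR : z ∈ Rpp Q Hv H η Z := huR Z hZI z hz
    obtain ⟨w, hw, hw1, _, hw3⟩ := hzR R hR hcross hZs
    have hwZ : w Z = some z := by
      have h := congrFun hw3 Z
      have hZmem : Z ∈ (↑(R.scheme \ H) : Set att) := by rw [hiso]; simp
      simp only [singletonTup, restrict, if_pos rfl, if_pos hZmem] at h
      exact h.symm
    have hkey : restrict (combine H η u) ↑R.scheme = w := by
      funext x
      by_cases hx : x ∈ R.scheme
      · by_cases hxH : x ∈ H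
        · have := hw1 x (Finset.mem_inter.2 ⟨hx, hxH⟩)
          simp [restrict, combine, hx, hxH, this]
        · have hxZ : x = Z := by
            have : x ∈ R.scheme \ H := Finset.mem_sdiff.2 ⟨hx, hxH⟩
            rw [hiso] at this
            exact Finset.mem_singleton.1 this
          subst hxZ
          simp [restrict, combine, hx, hxH, hz, hwZ]
      · have hwx : w x = none := by
          rw [← Option.not_isSome_iff_eq_none]
          simp [R.wf w hw x, hx]
        simp [restrict, hx, hwx]
    rw [hkey]
    exact hw
  · intro X hX x hx
    exact hηh X hX x (by simpa [combine, hX] using hx)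
  · intro Y hY y hy
    have hYH : Y ∉ H := fun h => (Finset.mem_sdiff.1 (Finset.mem_filter.1 hY).1).2 h
    have huY : u Y = some y := by simpa [combine, hYH] using hy
    exact rpp_appears Q Hv hB H η hY (huR Y hY y huY)

/-- For a simple binary join query `Q`, `λ ∈ [1, m]`,
`H ⊆ attset Q` and `I` the set of isolated attributes:
`Σ_{η ∈ config(Q,H)} |Join(Q''_isolated(η))| ≤ |Join(Q*)|`. -/
theorem iso_product_card_le_star [Finite att] [Countable dom] [Infinite dom]
    (Q : Finset (Relation att dom)) (hS : SimpleQ Q) (hB : BinaryQ Q)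
    (lam : ℕ) (hlam1 : 1 ≤ lam) (hlam2 : lam ≤ inputSize Q)
    (H : Finset att) (hH : H ⊆ attset Q) :
    (∑ᶠ η ∈ config (HeavyOn Q lam) H,
        (JoinIso Q (HeavyOn Q lam) H η (isolatedSet Q H)).ncard)
      ≤ (JoinStar Q (HeavyOn Q lam) H).ncard := by
  set Hv := HeavyOn Q lam with hHvdef
  set I := isolatedSet Q H with hIdef
  have hIH : ∀ x ∈ I, x ∉ H := fun x hx =>
    (Finset.mem_sdiff.1 (Finset.mem_filter.1 hx).1).2
  have hApp : ∀ a, {x : dom | AppearsOn Q a x}.Finite := appearsOn_finite Q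
  have hcfgFin : (config Hv H).Finite := by
    apply finite_of_pointwise _ (fun a => {x | AppearsOn Q a x}) hApp
    intro t ht a x hx
    have haH : a ∈ H := by
      have := (ht.1 a).1 (by simp [hx])
      simpa using this
    exact heavy_appearsOn Q lam hlam1 hlam2 (ht.2 a haH x hx)
  have hstarFin : (JoinStar Q Hv H).Finite := by
    apply finite_of_pointwise _ (fun a => {x | AppearsOn Q a x}) hApp
    intro t ht a x hx
    have haIH : a ∈ I ∪ H := by
      have := (ht.1 a).1 (by simp [hx])
      simpa using this
    rcases Finset.mem_union.1 haIH with haI | haH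
    · exact ht.2.2.2 a haI x hx
    · exact heavy_appearsOn Q lam hlam1 hlam2 (ht.2.2.1 a haH x hx)
  have hisoFin : ∀ η, (JoinIso Q Hv H η I).Finite := by
    intro η
    apply finite_of_pointwise _ (fun a => {x | AppearsOn Q a x}) hApp
    intro u hu a x hx
    have haI : a ∈ I := by
      have := (hu.1 a).1 (by simp [hx])
      simpa using this
    exact rpp_appears Q Hv hB H η haI (hu.2 a haI x hx)
  rw [finsum_mem_eq_finite_toFinset_sum _ hcfgFin]
  set s := hcfgFin.toFinset with hsdef
  set T := hstarFin.toFinset with hTdef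
  set t : Tup att dom → Finset (Tup att dom) :=
    fun η => T.filter (fun v => v ∈ combine H η '' JoinIso Q Hv H η I) with htdef
  have hsub : ∀ η, t η ⊆ T := fun η => Finset.filter_subset _ _
  have himg : ∀ η ∈ s, (↑(t η) : Set (Tup att dom))
      = combine H η '' JoinIso Q Hv H η I := by
    intro η hη
    have hηc : η ∈ config Hv H := hcfgFin.mem_toFinset.1 hη
    ext v
    constructor
    · intro hv
      exact (Finset.mem_filter.1 hv).2
    · intro hv
      refine Finset.mem_coe.2 (Finset.mem_filter.2 ⟨?_, hv⟩)
      obtain ⟨u, hu, rfl⟩ := hv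
      exact hstarFin.mem_toFinset.2 (combine_mem_star Q hB Hv H hηc hu)
  have hcard : ∀ η ∈ s, (JoinIso Q Hv H η I).ncard = (t η).card := by
    intro η hη
    have hinj : Set.InjOn (combine H η) (JoinIso Q Hv H η I) :=
      combine_injOn H I hIH η (fun u hu => hu.1)
    calc (JoinIso Q Hv H η I).ncard
        = (combine H η '' JoinIso Q Hv H η I).ncard :=
          (Set.ncard_image_of_injOn hinj).symm
      _ = (t η).card := by rw [← himg η hη, Set.ncard_coe_finset]
  have hdisj : ∀ η ∈ s, ∀ η' ∈ s, η ≠ η' → Disjoint (t η) (t η') := by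
    intro η hη η' hη' hne
    rw [Finset.disjoint_left]
    intro v hv hv'
    have hηc : η ∈ config Hv H := hcfgFin.mem_toFinset.1 hη
    have hη'c : η' ∈ config Hv H := hcfgFin.mem_toFinset.1 hη'
    obtain ⟨u, _, hvu⟩ := (Finset.mem_filter.1 hv).2
    obtain ⟨u', _, hvu'⟩ := (Finset.mem_filter.1 hv').2
    apply hne
    calc η = restrict (combine H η u) ↑H := (restrict_combine_left H u hηc.1).symm
      _ = restrict v ↑H := by rw [hvu]
      _ = restrict (combine H η' u') ↑H := by rw [hvu']
      _ = η' := restrict_combine_left H u' hη'c.1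
  calc ∑ η ∈ s, (JoinIso Q Hv H η I).ncard
      = ∑ η ∈ s, (t η).card := Finset.sum_congr rfl hcard
    _ = (s.biUnion t).card := (Finset.card_biUnion hdisj).symm
    _ ≤ T.card := Finset.card_le_card (Finset.biUnion_subset.2 fun η _ => hsub η)
    _ = (JoinStar Q Hv H).ncard := (Set.ncard_eq_toFinset_card _ hstarFin).symm

end BinaryJoins
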